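/- Let β > 1 be a Parry number, so that f_β(z) = -P*_{β,P}(z)/(1-z^{p+1}) is a rational function (nonsimple case) or f_β(z) = -P*_{β,P}(z) (simple case), where P*_{β,P} is the reciprocal of the Parry polynomial. In the factorization of the Parry polynomial P_{β,P}(X) into irreducible factors over ℚ, the minimal polynomial P_β(X) of β appears with multiplicity exactly one. -/

import Mathlib

/-- The beta-transformation `T_β : [0,1] → [0,1]`, `x ↦ {βx}`. -/
noncomputable def betaT (β : ℝ) : ℝ → ℝ := fun x => Int.fract (β * x)

/-- The digits `t_j = ⌊β · T_β^{j-1}(1)⌋` of the Rényi β-expansion of 1 (for `j ≥ 1`). -/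
noncomputable def betaDigit (β : ℝ) (j : ℕ) : ℤ := ⌊β * (betaT β)^[j - 1] 1⌋

/-- The polynomial `r_n(X) = X^n - t₁X^{n-1} - ⋯ - t_n` built from the digits of the
Rényi β-expansion of 1. -/
noncomputable def rpoly (β : ℝ) (n : ℕ) : Polynomial ℤ :=
  Polynomial.X ^ n - ∑ k ∈ Finset.Icc 1 n, Polynomial.C (betaDigit β k) * Polynomial.X ^ (n - k)

/-- `β` is a Parry number with Parry polynomial `P`: either `β` is a simple Parry number
(with `d_β(1)` of minimal length `m`, period parameter `p = 0`, `P = r_m`), or `β` is a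
nonsimple Parry number with preperiod length `m` and period length `p+1` (both minimal)
and `P = r_{m+p+1} - r_m` (for `m = 0` this is the purely periodic case `r_{p+1} - 1`). -/
def IsParryData (β : ℝ) (m p : ℕ) (P : Polynomial ℤ) : Prop :=
  ((betaT β)^[m] 1 = 0 ∧ (∀ m' : ℕ, (betaT β)^[m'] 1 = 0 → m ≤ m') ∧ p = 0 ∧
      P = rpoly β m) ∨
  ((∀ j : ℕ, (betaT β)^[j] 1 ≠ 0) ∧
      (betaT β)^[m + p + 1] 1 = (betaT β)^[m] 1 ∧
      (∀ m' p' : ℕ, (betaT β)^[m' + p' + 1] 1 = (betaT β)^[m'] 1 → m ≤ m' ∧ p ≤ p') ∧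
      P = rpoly β (m + p + 1) - rpoly β m)

open Polynomial in
lemma rpoly_zero (β : ℝ) : rpoly β 0 = 1 := by
  simp [rpoly]

open Polynomial in
lemma rpoly_succ (β : ℝ) (n : ℕ) :
    rpoly β (n + 1) = X * rpoly β n - C (betaDigit β (n + 1)) := by
  unfold rpoly
  rw [Finset.sum_Icc_succ_top (by omega : 1 ≤ n + 1)]
  rw [mul_sub, Finset.mul_sum]
  have h : ∀ k ∈ Finset.Icc 1 n,
      C (betaDigit β k) * X ^ (n + 1 - k) = X * (C (betaDigit β k) * X ^ (n - k)) := by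
    intro k hk
    have hk' : k ≤ n := (Finset.mem_Icc.mp hk).2
    have : n + 1 - k = (n - k) + 1 := by omega
    rw [this, pow_succ]
    ring
  rw [Finset.sum_congr rfl h]
  rw [Nat.sub_self, pow_zero, mul_one, pow_succ]
  ring

lemma betaT_iter_nonneg (β : ℝ) (n : ℕ) : 0 ≤ (betaT β)^[n] 1 := by
  cases n with
  | zero => norm_num
  | succ k =>
    rw [Function.iterate_succ_apply']
    exact Int.fract_nonneg _

open Polynomial in
lemma aeval_rpoly (β : ℝ) (n : ℕ) :
    (aeval β) (rpoly β n) = (betaT β)^[n] 1 := by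
  induction n with
  | zero => simp [rpoly_zero]
  | succ k ih =>
    rw [rpoly_succ]
    simp only [map_sub, map_mul, aeval_X, aeval_C, ih, Function.iterate_succ_apply']
    have : betaDigit β (k + 1) = ⌊β * (betaT β)^[k] 1⌋ := by
      simp [betaDigit]
    rw [this]
    simp only [betaT, eq_intCast, algebraMap_int_eq]
    exact Int.self_sub_floor _

open Polynomial in
noncomputable def Dval (β : ℝ) (n : ℕ) : ℝ := (aeval β) (derivative (rpoly β n))

open Polynomial in
lemma Dval_zero (β : ℝ) : Dval β 0 = 0 := by
  simp [Dval, rpoly_zero]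

open Polynomial in
lemma Dval_succ (β : ℝ) (n : ℕ) :
    Dval β (n + 1) = (betaT β)^[n] 1 + β * Dval β n := by
  unfold Dval
  rw [rpoly_succ]
  simp [derivative_mul, aeval_rpoly]
  try ring

lemma Dval_nonneg (β : ℝ) (hβ : 1 < β) (n : ℕ) : 0 ≤ Dval β n := by
  induction n with
  | zero => rw [Dval_zero]
  | succ k ih =>
    rw [Dval_succ]
    have := betaT_iter_nonneg β k
    nlinarith

lemma Dval_ge (β : ℝ) (hβ : 1 < β) (n : ℕ) : β ^ n ≤ Dval β (n + 1) := by
  induction n with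
  | zero => simp [Dval_succ, Dval_zero]
  | succ k ih =>
    rw [Dval_succ]
    have h1 := betaT_iter_nonneg β (k + 1)
    have h2 : β ^ (k + 1) ≤ β * Dval β (k + 1) := by
      rw [pow_succ, mul_comm]
      have hb : (0:ℝ) < β := by linarith
      nlinarith
    linarith

lemma Dval_strictMono (β : ℝ) (hβ : 1 < β) (hne : ∀ j : ℕ, (betaT β)^[j] 1 ≠ 0) :
    StrictMono (Dval β) := by
  apply strictMono_nat_of_lt_succ
  intro n
  rw [Dval_succ]
  have h1 : 0 < (betaT β)^[n] 1 :=
    lt_of_le_of_ne (betaT_iter_nonneg β n) (Ne.symm (hne n))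
  have h2 := Dval_nonneg β hβ n
  nlinarith

open Polynomial in
lemma main_aux (β : ℝ) (P : Polynomial ℤ) (h0 : (aeval β) P = 0)
    (h1 : (aeval β) (derivative P) ≠ 0) :
    minpoly ℚ β ∣ P.map (Int.castRingHom ℚ) ∧
    ¬ (minpoly ℚ β) ^ 2 ∣ P.map (Int.castRingHom ℚ) := by
  have hmap : Int.castRingHom ℚ = algebraMap ℤ ℚ := by
    ext n; simp
  set Q : Polynomial ℚ := P.map (Int.castRingHom ℚ) with hQdef
  have hQ0 : (aeval β) Q = 0 := by
    rw [hQdef, hmap, aeval_map_algebraMap]; exact h0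
  have hQ1 : (aeval β) (derivative Q) ≠ 0 := by
    rw [hQdef, derivative_map, hmap, aeval_map_algebraMap]; exact h1
  have hQne : Q ≠ 0 := by
    intro h
    apply hQ1
    rw [h]; simp
  have hint : IsIntegral ℚ β := IsAlgebraic.isIntegral ⟨Q, hQne, hQ0⟩
  constructor
  · exact minpoly.dvd ℚ β hQ0
  · rintro ⟨c, hc⟩
    apply hQ1
    rw [hc]
    simp [derivative_mul, derivative_pow, minpoly.aeval]

/-- In the factorization of the Parry polynomial of a Parry number `β` into irreducible
factors over `ℚ`, the minimal polynomial of `β` appears with multiplicity exactly one. -/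
theorem stmt_14 (β : ℝ) (hβ : 1 < β) (m p : ℕ) (P : Polynomial ℤ)
    (hparry : IsParryData β m p P) :
    minpoly ℚ β ∣ P.map (Int.castRingHom ℚ) ∧
    ¬ (minpoly ℚ β) ^ 2 ∣ P.map (Int.castRingHom ℚ) := by
  rcases hparry with ⟨hm0, hmin, hp, hP⟩ | ⟨hne, hper, hmin, hP⟩
  · -- simple case
    have hm : m ≠ 0 := by
      intro h
      rw [h] at hm0
      norm_num at hm0
    obtain ⟨k, rfl⟩ : ∃ k, m = k + 1 := ⟨m - 1, by omega⟩
    apply main_aux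
    · rw [hP, aeval_rpoly, hm0]
    · rw [hP]
      have := Dval_ge β hβ k
      have hb : (0:ℝ) < β ^ k := pow_pos (by linarith) k
      show Dval β (k + 1) ≠ 0
      linarith
  · -- nonsimple case
    apply main_aux
    · rw [hP]
      simp only [map_sub, aeval_rpoly, hper, sub_self]
    · rw [hP]
      have hlt : Dval β m < Dval β (m + p + 1) :=
        Dval_strictMono β hβ hne (by omega)
      simp only [map_sub]
      show Dval β (m + p + 1) - Dval β m ≠ 0
      linarith
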